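/- arXiv:2511.21074 — 2 statements merged into one kernel-verified Lean document; each statement's English description precedes it below -/
import Mathlib

section
/- Let S_1, S_2, … be an i.i.d. sequence of random vectors in ℝ^p with E[S_i] = 0 and ‖S_i‖₂ ≤ κ almost surely, whose second-moment matrix M = E[S_i S_iᵀ] has rank n with nonzero eigenvalues D_1 > D_2 > … > D_n > 0. For each N let d_1 ≥ … ≥ d_n be the nonzero singular values of S_samp = [S_1, …, S_N] ∈ ℝ^{p×N}, so that the nonzero eigenvalues of M̂ = (1/N) S_samp S_sampᵀ are d_i²/N. Then for every ε > 0 there exist constants C, c > 0 such that for all N, Pr( max_{1≤i≤n} | d_i/√N − √(D_i) | > ε ) ≤ C N^{−c}. -/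
open MeasureTheory ProbabilityTheory Matrix Polynomial

lemma my_charpoly_eval {p : ℕ} (M : Matrix (Fin p) (Fin p) ℝ) (t : ℝ) :
    M.charpoly.eval t = (Matrix.scalar (Fin p) t - M).det := by
  rw [Matrix.eval_charpoly]

lemma my_scalar_mulVec {p : ℕ} (t : ℝ) (v : Fin p → ℝ) :
    (Matrix.scalar (Fin p) t).mulVec v = t • v := by
  ext x
  simp [Matrix.scalar, Matrix.mulVec_diagonal]

lemma my_eigvec_of_root {p : ℕ} (M : Matrix (Fin p) (Fin p) ℝ) (t : ℝ)
    (h : M.charpoly.eval t = 0) :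
    ∃ v : Fin p → ℝ, v ≠ 0 ∧ M.mulVec v = t • v := by
  rw [my_charpoly_eval] at h
  obtain ⟨v, hv, hv0⟩ := (Matrix.exists_mulVec_eq_zero_iff).2 h
  refine ⟨v, hv, ?_⟩
  have h1 := sub_mulVec (Matrix.scalar (Fin p) t) M v
  rw [hv0, my_scalar_mulVec] at h1
  exact (sub_eq_zero.mp h1.symm).symm

lemma my_root_of_eigvec {p : ℕ} (M : Matrix (Fin p) (Fin p) ℝ) (t : ℝ)
    (v : Fin p → ℝ) (hv : v ≠ 0) (h : M.mulVec v = t • v) :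
    M.charpoly.eval t = 0 := by
  rw [my_charpoly_eval]
  refine (Matrix.exists_mulVec_eq_zero_iff).1 ⟨v, hv, ?_⟩
  rw [sub_mulVec, h, my_scalar_mulVec, sub_self]

lemma my_bauer_fike {p : ℕ} (B : Matrix (Fin p) (Fin p) ℝ) (hB : B.IsHermitian)
    (lam c : ℝ) (hc : 0 ≤ c) (v : EuclideanSpace ℝ (Fin p)) (hv : v ≠ 0)
    (hw : ∑ k, (B.mulVec v k - lam * v k)^2 ≤ c^2 * ∑ k, (v k)^2) :
    ∃ j, |hB.eigenvalues j - lam| ≤ c := by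
  by_contra hcon
  push_neg at hcon
  set u := hB.eigenvectorBasis with hu
  set e := hB.eigenvalues with he
  set cf : Fin p → ℝ := fun j => (inner ℝ (u j) v : ℝ) with hcf
  have hrepr : ∑ j, cf j • u j = v := u.sum_repr' v
  have hptv : ∀ k, v k = ∑ j, cf j * u j k := by
    intro k
    conv_lhs => rw [← hrepr]
    rw [WithLp.ofLp_sum, Finset.sum_apply]
    simp [PiLp.smul_apply]
  have hmv : ∀ k, B.mulVec v k = ∑ j, cf j * (e j * u j k) := by
    intro k
    have : B.mulVec v k = ∑ l, B k l * v l := rfl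
    rw [this]
    simp_rw [hptv, Finset.mul_sum]
    rw [Finset.sum_comm]
    refine Finset.sum_congr rfl fun j _ => ?_
    have hej : B.mulVec (u j) = e j • (u j : Fin p → ℝ) := hB.mulVec_eigenvectorBasis j
    have : ∑ l, B k l * (cf j * u j l) = cf j * B.mulVec (u j) k := by
      rw [Matrix.mulVec, dotProduct, Finset.mul_sum]
      refine Finset.sum_congr rfl fun l _ => by ring
    rw [this, hej]
    simp [Pi.smul_apply]
  set w : EuclideanSpace ℝ (Fin p) := ∑ j, (cf j * (e j - lam)) • u j with hwdef
  have hptw : ∀ k, w k = B.mulVec v k - lam * v k := by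
    intro k
    rw [hwdef, WithLp.ofLp_sum, Finset.sum_apply]
    simp only [PiLp.smul_apply, smul_eq_mul]
    rw [hmv k, hptv k, Finset.mul_sum, ← Finset.sum_sub_distrib]
    refine Finset.sum_congr rfl fun j _ => by ring
  have hww : (inner ℝ w w : ℝ) = ∑ j, (cf j * (e j - lam))^2 := by
    rw [hwdef, u.orthonormal.inner_sum]
    simp [sq]
  have hvv : (inner ℝ v v : ℝ) = ∑ j, (cf j)^2 := by
    conv_lhs => rw [← hrepr]
    rw [u.orthonormal.inner_sum]
    simp [sq]
  have hwsum : (inner ℝ w w : ℝ) = ∑ k, (B.mulVec v k - lam * v k)^2 := by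
    rw [PiLp.inner_apply]
    simp [RCLike.inner_apply, conj_trivial, sq, hptw]
  have hvsum : (inner ℝ v v : ℝ) = ∑ k, (v k)^2 := by
    rw [PiLp.inner_apply]
    simp [RCLike.inner_apply, conj_trivial, sq]
  obtain ⟨j0, hj0⟩ : ∃ j, cf j ≠ 0 := by
    by_contra hall
    push_neg at hall
    apply hv
    rw [← hrepr]
    simp [hall]
  have hstrict : ∑ j, c^2 * (cf j)^2 < ∑ j, (cf j * (e j - lam))^2 := by
    refine Finset.sum_lt_sum (fun j _ => ?_) ⟨j0, Finset.mem_univ j0, ?_⟩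
    · have h1 : c^2 ≤ (e j - lam)^2 := by
        have := (hcon j).le
        calc c^2 ≤ |e j - lam|^2 := by
              apply pow_le_pow_left₀ hc this
          _ = (e j - lam)^2 := sq_abs _
      calc c^2 * (cf j)^2 ≤ (e j - lam)^2 * (cf j)^2 :=
            mul_le_mul_of_nonneg_right h1 (sq_nonneg _)
        _ = (cf j * (e j - lam))^2 := by ring
    · have h1 : c^2 < (e j0 - lam)^2 := by
        have := hcon j0
        calc c^2 < |e j0 - lam|^2 := by
              apply pow_lt_pow_left₀ this hc (by norm_num)
          _ = (e j0 - lam)^2 := sq_abs _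
      have h2 : (0:ℝ) < (cf j0)^2 := by positivity
      calc c^2 * (cf j0)^2 < (e j0 - lam)^2 * (cf j0)^2 :=
            mul_lt_mul_of_pos_right h1 h2
        _ = (cf j0 * (e j0 - lam))^2 := by ring
  have : ∑ j, (cf j * (e j - lam))^2 ≤ c^2 * ∑ j, (cf j)^2 := by
    rw [← hww, ← hvv, hwsum, hvsum]
    exact hw
  rw [← Finset.mul_sum] at hstrict
  linarith

lemma my_root_cases {p n : ℕ} (a : Fin n → ℝ) (t : ℝ)
    (h : (((∏ i : Fin n, (X - C (a i))) * X ^ (p - n)) : Polynomial ℝ).eval t = 0) :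
    (∃ i, t = a i) ∨ t = 0 := by
  rw [eval_mul, eval_prod, eval_pow, eval_X, mul_eq_zero] at h
  rcases h with h | h
  · rw [Finset.prod_eq_zero_iff] at h
    obtain ⟨i, _, hi⟩ := h
    simp only [eval_sub, eval_X, eval_C, sub_eq_zero] at hi
    exact Or.inl ⟨i, hi⟩
  · right
    exact (pow_eq_zero_iff'.mp h).1

lemma my_eigenvalue_is_root {p : ℕ} (B : Matrix (Fin p) (Fin p) ℝ) (hB : B.IsHermitian)
    (j : Fin p) : B.charpoly.eval (hB.eigenvalues j) = 0 := by
  refine my_root_of_eigvec B _ (hB.eigenvectorBasis j) ?_ (hB.mulVec_eigenvectorBasis j)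
  intro h0
  have h1 : hB.eigenvectorBasis j = 0 := by
    ext k
    exact congrFun h0 k
  have := hB.eigenvectorBasis.orthonormal.1 j
  rw [h1] at this
  simp at this

lemma my_strictMono_id {n : ℕ} (f : Fin n → Fin n) (hmono : StrictMono f) : ∀ i, f i = i := by
  have hinj : Function.Injective f := hmono.injective
  have hsurj : Function.Surjective f := (Finite.injective_iff_bijective.mp hinj).2
  have iso := StrictMono.orderIsoOfSurjective f hmono hsurj
  have : StrictMono.orderIsoOfSurjective f hmono hsurj = OrderIso.refl (Fin n) :=
    Subsingleton.elim _ _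
  intro i
  have := congrArg (fun g => g i) (congrArg (fun (g : Fin n ≃o Fin n) => (g : Fin n → Fin n)) this)
  simpa [StrictMono.coe_orderIsoOfSurjective] using this

lemma my_det_main {p n : ℕ} (hnp : n ≤ p)
    (M B : Matrix (Fin p) (Fin p) ℝ) (hBh : B.IsHermitian)
    (D : Fin n → ℝ) (hDpos : ∀ i, 0 < D i) (hDanti : StrictAnti D)
    (hMc : M.charpoly = (∏ i : Fin n, (X - C (D i))) * X ^ (p - n))
    (e : Fin n → ℝ) (he0 : ∀ i, 0 ≤ e i) (heanti : Antitone e)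
    (hBc : B.charpoly = (∏ i : Fin n, (X - C (e i))) * X ^ (p - n))
    (t : ℝ) (ht : 0 < t)
    (hgap : ∀ i j, i ≠ j → 2 * t < |D i - D j|) (hDt : ∀ i, t < D i)
    (hclose : ∀ a b, |B a b - M a b| ≤ t / p) :
    ∀ i, |e i - D i| ≤ t := by
  rcases Nat.eq_zero_or_pos n with hn | hn
  · subst hn
    intro i
    exact i.elim0
  have hp : 0 < p := by omega
  -- for each i, find k with |e k - D i| ≤ t
  have key : ∀ i : Fin n, ∃ k : Fin n, |e k - D i| ≤ t := by
    intro i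
    -- eigenvector of M for D i
    have hroot : M.charpoly.eval (D i) = 0 := by
      rw [hMc, eval_mul, eval_prod]
      have : ((X : Polynomial ℝ) - C (D i)).eval (D i) = 0 := by simp
      rw [Finset.prod_eq_zero (Finset.mem_univ i) this, zero_mul]
    obtain ⟨v, hv0, hveq⟩ := my_eigvec_of_root M (D i) hroot
    -- bound ∑ ((B - M) v)^2
    have hsum : ∑ k, (B.mulVec v k - D i * v k) ^ 2 ≤ t ^ 2 * ∑ k, (v k) ^ 2 := by
      have hBM : ∀ k, B.mulVec v k - D i * v k = (B - M).mulVec v k := by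
        intro k
        rw [Matrix.sub_mulVec]
        have : M.mulVec v k = D i * v k := by rw [hveq]; simp
        simp [this]
      calc ∑ k, (B.mulVec v k - D i * v k) ^ 2
          = ∑ k, ((B - M).mulVec v k) ^ 2 := by simp_rw [hBM]
        _ ≤ ∑ k : Fin p, ((t ^ 2 / p) * ∑ l, (v l) ^ 2) := by
            refine Finset.sum_le_sum fun k _ => ?_
            have hcs := Finset.sum_mul_sq_le_sq_mul_sq Finset.univ
              (fun l => (B - M) k l) v
            have hmv : (B - M).mulVec v k = ∑ l, (B - M) k l * v l := rfl
            rw [hmv]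
            refine le_trans hcs ?_
            have hE : ∑ l, ((B - M) k l) ^ 2 ≤ t ^ 2 / p := by
              have : ∀ l, ((B - M) k l) ^ 2 ≤ (t / p) ^ 2 := by
                intro l
                have := hclose k l
                have habs : |(B - M) k l| ≤ t / p := by
                  simpa [Matrix.sub_apply] using this
                calc ((B - M) k l) ^ 2 = |(B - M) k l| ^ 2 := (sq_abs _).symm
                  _ ≤ (t / p) ^ 2 := by
                      apply pow_le_pow_left₀ (abs_nonneg _) habs
              calc ∑ l, ((B - M) k l) ^ 2 ≤ ∑ _l : Fin p, (t / p) ^ 2 :=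
                    Finset.sum_le_sum fun l _ => this l
                _ = p * (t / p) ^ 2 := by simp [mul_comm]
                _ = t ^ 2 / p := by
                    field_simp
            exact mul_le_mul_of_nonneg_right hE (Finset.sum_nonneg fun l _ => sq_nonneg _)
        _ = p * ((t ^ 2 / p) * ∑ l, (v l) ^ 2) := by simp [mul_comm]
        _ ≤ t ^ 2 * ∑ l, (v l) ^ 2 := by
            rw [← mul_assoc]
            have : (p : ℝ) * (t ^ 2 / p) = t ^ 2 := by
              field_simp
            rw [this]
    obtain ⟨j, hj⟩ := my_bauer_fike B hBh (D i) t ht.le (WithLp.toLp 2 v)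
      (by intro h; apply hv0; have := congrArg WithLp.ofLp h; simpa using this) hsum
    -- the eigenvalue is a root of B.charpoly
    have hroot2 := my_eigenvalue_is_root B hBh j
    rw [hBc] at hroot2
    rcases my_root_cases e _ hroot2 with ⟨k, hk⟩ | h0
    · exact ⟨k, by rw [← hk]; exact hj⟩
    · exfalso
      rw [h0] at hj
      have : D i ≤ t := by
        have := abs_le.mp hj
        linarith [(abs_le.mp hj).1]
      linarith [hDt i]
  choose g hg using key
  have hginj : Function.Injective g := by
    intro i j hij
    by_contra hne
    have h1 := hg i
    have h2 := hg j
    rw [hij] at h1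
    have := hgap i j hne
    have : |D i - D j| ≤ 2 * t := by
      have : D i - D j = (e (g j) - D j) - (e (g j) - D i) := by ring
      rw [this]
      calc |(e (g j) - D j) - (e (g j) - D i)| ≤ |e (g j) - D j| + |e (g j) - D i| :=
            abs_sub _ _
        _ ≤ t + t := add_le_add h2 h1
        _ = 2 * t := by ring
    linarith [hgap i j hne]
  have hmono : StrictMono g := by
    intro i j hij
    have hDij : D j < D i := hDanti hij
    have h1 := abs_le.mp (hg i)
    have h2 := abs_le.mp (hg j)
    have hgap' := hgap i j (ne_of_lt hij)
    have habs : 2 * t < D i - D j := by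
      rcases abs_cases (D i - D j) with ⟨hh, _⟩ | ⟨hh, _⟩
      · linarith [hgap i j (ne_of_lt hij)]
      · linarith [hgap i j (ne_of_lt hij)]
    have : e (g j) < e (g i) := by linarith
    by_contra hle
    push_neg at hle
    have := heanti hle
    linarith
  intro i
  have := my_strictMono_id g hmono i
  have h := hg i
  rw [this] at h
  exact h

lemma my_cheb {Ω : Type*} [MeasurableSpace Ω] (μ : Measure Ω) [IsProbabilityMeasure μ]
    (Y : ℕ → Ω → ℝ) (hYmeas : ∀ i, Measurable (Y i))
    (hYindep : iIndepFun Y μ)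
    (hYid : ∀ i, IdentDistrib (Y i) (Y 0) μ μ)
    (K : ℝ) (hK : 0 ≤ K) (hYbd : ∀ i, ∀ᵐ ω ∂μ, |Y i ω| ≤ K)
    (m : ℝ) (hm : ∫ ω, Y 0 ω ∂μ = m)
    (N : ℕ) (hN : 1 ≤ N) (s : ℝ) (hs : 0 < s) :
    μ {ω | s ≤ |(N : ℝ)⁻¹ * ∑ i ∈ Finset.range N, Y i ω - m|} ≤
      ENNReal.ofReal (K ^ 2 / (s ^ 2 * N)) := by
  have hNpos : (0 : ℝ) < N := by exact_mod_cast hN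
  have hYlp : ∀ i, MemLp (Y i) 2 μ := fun i =>
    (memLp_top_of_bound (hYmeas i).aestronglyMeasurable K
      ((hYbd i).mono fun ω h => by simpa using h)).mono_exponent le_top
  have hint : ∀ i, ∫ ω, Y i ω ∂μ = m := fun i => by
    rw [(hYid i).integral_eq, hm]
  set Z : Ω → ℝ := ∑ i ∈ Finset.range N, Y i with hZ
  have hZlp : MemLp Z 2 μ := memLp_finset_sum' _ fun i _ => hYlp i
  have hZmean : μ[Z] = N * m := by
    rw [hZ]
    have : ∫ ω, (∑ i ∈ Finset.range N, Y i) ω ∂μ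
        = ∫ ω, ∑ i ∈ Finset.range N, Y i ω ∂μ := by
      congr 1
      funext ω
      simp
    rw [this, integral_finset_sum _ fun i _ => (hYlp i).integrable one_le_two]
    simp [hint]
  have hvar : variance Z μ ≤ N * K ^ 2 := by
    rw [hZ, IndepFun.variance_sum (fun i _ => hYlp i)
      (fun i _ j _ hij => hYindep.indepFun hij)]
    have hone : ∀ i, variance (Y i) μ ≤ K ^ 2 := by
      intro i
      rw [variance_eq_sub (hYlp i)]
      have h1 : μ[(Y i) ^ 2] ≤ K ^ 2 := by
        have hle : ∀ᵐ ω ∂μ, (Y i ω) ^ 2 ≤ K ^ 2 := (hYbd i).mono fun ω h => by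
          calc (Y i ω) ^ 2 = |Y i ω| ^ 2 := (sq_abs _).symm
            _ ≤ K ^ 2 := pow_le_pow_left₀ (abs_nonneg _) h 2
        calc μ[(Y i) ^ 2] = ∫ ω, (Y i ω) ^ 2 ∂μ := rfl
          _ ≤ ∫ _ω, K ^ 2 ∂μ :=
              integral_mono_ae (hYlp i).integrable_sq (integrable_const _) hle
          _ = K ^ 2 := by simp
      nlinarith [sq_nonneg (μ[Y i])]
    calc ∑ i ∈ Finset.range N, variance (Y i) μ ≤ ∑ _i ∈ Finset.range N, K ^ 2 :=
          Finset.sum_le_sum fun i _ => hone i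
      _ = N * K ^ 2 := by simp [mul_comm]
  have hsub : {ω | s ≤ |(N : ℝ)⁻¹ * ∑ i ∈ Finset.range N, Y i ω - m|} ⊆
      {ω | N * s ≤ |Z ω - μ[Z]|} := by
    intro ω hω
    simp only [Set.mem_setOf_eq] at hω ⊢
    have hZω : Z ω = ∑ i ∈ Finset.range N, Y i ω := by
      rw [hZ]; simp
    have heq : Z ω - μ[Z] = N * ((N : ℝ)⁻¹ * ∑ i ∈ Finset.range N, Y i ω - m) := by
      rw [hZmean, hZω]
      field_simp
    rw [heq, abs_mul, abs_of_pos hNpos]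
    exact mul_le_mul_of_nonneg_left hω hNpos.le
  calc μ {ω | s ≤ |(N : ℝ)⁻¹ * ∑ i ∈ Finset.range N, Y i ω - m|}
      ≤ μ {ω | N * s ≤ |Z ω - μ[Z]|} := measure_mono hsub
    _ ≤ ENNReal.ofReal (variance Z μ / (N * s) ^ 2) :=
        meas_ge_le_variance_div_sq hZlp (by positivity)
    _ ≤ ENNReal.ofReal (K ^ 2 / (s ^ 2 * N)) := by
        apply ENNReal.ofReal_le_ofReal
        rw [div_le_div_iff₀ (by positivity) (by positivity)]
        calc variance Z μ * (s ^ 2 * N) ≤ (N * K ^ 2) * (s ^ 2 * N) := by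
              apply mul_le_mul_of_nonneg_right hvar (by positivity)
          _ = K ^ 2 * (N * s) ^ 2 := by ring

/-- Let `S_1, S_2, …` be i.i.d. centered random vectors in `ℝ^p`,
bounded by `κ` in Euclidean norm, whose second-moment matrix `M` has rank `n` with
simple nonzero eigenvalues `D_1 > … > D_n > 0` (encoded via its characteristic
polynomial).  For each `N`, let `d N ω : Fin n → ℝ` list (in nonincreasing order) the
nonzero singular values of `S_samp = [S_1, …, S_N]`, so that the nonzero eigenvalues of
`M̂ = (1/N) S_samp S_sampᵀ` are `d_i²/N` (again encoded via the characteristic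
polynomial).  Then for every `ε > 0` there are `C, c > 0` so that for all `N ≥ 1`,
`Pr(max_i |d_i/√N − √(D_i)| > ε) ≤ C N^{−c}`. -/
theorem singular_value_consistency
    {Ω : Type*} [MeasurableSpace Ω] (μ : Measure Ω) [IsProbabilityMeasure μ]
    (p n : ℕ) (hnp : n ≤ p) (κ : ℝ)
    (S : ℕ → Ω → Fin p → ℝ) (hmeas : ∀ i, Measurable (S i))
    (hindep : iIndepFun S μ)
    (hident : ∀ i, IdentDistrib (S i) (S 0) μ μ)
    (hcent : ∀ k, ∫ ω, S 0 ω k ∂μ = 0)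
    (hbound : ∀ i, ∀ᵐ ω ∂μ, Real.sqrt (∑ k, (S i ω k) ^ 2) ≤ κ)
    (M : Matrix (Fin p) (Fin p) ℝ)
    (hM : ∀ a b, M a b = ∫ ω, S 0 ω a * S 0 ω b ∂μ)
    (D : Fin n → ℝ) (hDpos : ∀ i, 0 < D i) (hDanti : StrictAnti D)
    (hMeig : M.charpoly = (∏ i : Fin n, (X - C (D i))) * X ^ (p - n))
    (d : (N : ℕ) → Ω → Fin n → ℝ)
    (hd0 : ∀ N ω i, 0 ≤ d N ω i)
    (hdanti : ∀ N ω, Antitone (d N ω))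
    (hdchar : ∀ (N : ℕ) (ω : Ω),
      (Matrix.of fun a b : Fin p =>
          (N : ℝ)⁻¹ * ∑ i ∈ Finset.range N, S i ω a * S i ω b).charpoly =
        (∏ i : Fin n, (X - C ((d N ω i) ^ 2 / N))) * X ^ (p - n)) :
    ∀ ε : ℝ, 0 < ε → ∃ C : ℝ, 0 < C ∧ ∃ c : ℝ, 0 < c ∧ ∀ N : ℕ, 1 ≤ N →
      μ {ω | ∃ i : Fin n, ε < |d N ω i / Real.sqrt N - Real.sqrt (D i)|} ≤
        ENNReal.ofReal (C * (N : ℝ) ^ (-c)) := by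
  intro ε hε
  rcases Nat.eq_zero_or_pos n with hn | hn
  · refine ⟨1, one_pos, 1, one_pos, fun N hN => ?_⟩
    have : {ω | ∃ i : Fin n, ε < |d N ω i / Real.sqrt N - Real.sqrt (D i)|} = ∅ := by
      subst hn
      ext ω
      simp [Fin.isEmpty]
    rw [this]
    simp
  have hp : 0 < p := lt_of_lt_of_le hn hnp
  -- κ is nonnegative
  have hκ0 : 0 ≤ κ := by
    have hne : μ ≠ 0 := IsProbabilityMeasure.ne_zero μ
    haveI := MeasureTheory.ae_neBot.mpr hne
    obtain ⟨ω, hω⟩ := (hbound 0).exists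
    exact le_trans (Real.sqrt_nonneg _) hω
  -- entrywise a.s. bound
  have hSabs : ∀ i a, ∀ᵐ ω ∂μ, |S i ω a| ≤ κ := by
    intro i a
    refine (hbound i).mono fun ω h => ?_
    calc |S i ω a| = Real.sqrt ((S i ω a) ^ 2) := (Real.sqrt_sq_eq_abs _).symm
      _ ≤ Real.sqrt (∑ k, (S i ω k) ^ 2) :=
          Real.sqrt_le_sqrt (Finset.single_le_sum (f := fun k => (S i ω k) ^ 2)
            (fun k _ => sq_nonneg _) (Finset.mem_univ a))
      _ ≤ κ := h
  -- choose the threshold t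
  set i0 : Fin n := ⟨n - 1, by omega⟩ with hi0
  have hDmin : ∀ i : Fin n, D i0 ≤ D i := by
    intro i
    exact hDanti.antitone (by
      show i ≤ i0
      rw [Fin.le_def]
      simp [hi0]
      omega)
  set t1 : ℝ := Finset.univ.inf' ⟨(i0, i0), Finset.mem_univ _⟩
    (fun ij : Fin n × Fin n => if ij.1 = ij.2 then D ij.1 else |D ij.1 - D ij.2| / 2) with ht1
  have ht1pos : 0 < t1 := by
    rw [ht1]
    refine (Finset.lt_inf'_iff _).2 ?_
    rintro ⟨i, j⟩ _
    by_cases h : i = j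
    · simpa [h] using hDpos j
    · have : D i ≠ D j := fun hc => h (hDanti.injective hc)
      simp only [h, if_false]
      have : 0 < |D i - D j| := abs_pos.mpr (sub_ne_zero.mpr this)
      linarith
  have ht1le : ∀ i j : Fin n, i ≠ j → t1 ≤ |D i - D j| / 2 := by
    intro i j hij
    have h := Finset.inf'_le (b := (i, j))
      (f := fun ij : Fin n × Fin n => if ij.1 = ij.2 then D ij.1 else |D ij.1 - D ij.2| / 2)
      (Finset.mem_univ _)
    simp only [if_neg hij] at h
    exact h
  have ht1leD : ∀ i : Fin n, t1 ≤ D i := by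
    intro i
    have h := Finset.inf'_le (b := (i, i))
      (f := fun ij : Fin n × Fin n => if ij.1 = ij.2 then D ij.1 else |D ij.1 - D ij.2| / 2)
      (Finset.mem_univ _)
    simp only [if_pos rfl] at h
    exact h
  set t : ℝ := min t1 (ε * Real.sqrt (D i0)) / 2 with htdef
  have htpos : 0 < t := by
    have h2 : 0 < ε * Real.sqrt (D i0) := by
      have := Real.sqrt_pos.mpr (hDpos i0)
      positivity
    rw [htdef]
    have := lt_min ht1pos h2
    positivity
  have hgap : ∀ i j : Fin n, i ≠ j → 2 * t < |D i - D j| := by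
    intro i j hij
    have h1 : t ≤ t1 / 2 := by
      rw [htdef]
      have := min_le_left t1 (ε * Real.sqrt (D i0))
      linarith
    have h2 := ht1le i j hij
    have h3 : 0 < |D i - D j| :=
      abs_pos.mpr (sub_ne_zero.mpr fun hc => hij (hDanti.injective hc))
    linarith
  have hDt : ∀ i : Fin n, t < D i := by
    intro i
    have h1 : t ≤ t1 / 2 := by
      rw [htdef]
      have := min_le_left t1 (ε * Real.sqrt (D i0))
      linarith
    have := ht1leD i
    linarith [hDpos i, ht1pos]
  have htball : ∀ i : Fin n, t ≤ ε * Real.sqrt (D i) := by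
    intro i
    have h1 : t ≤ ε * Real.sqrt (D i0) / 2 := by
      rw [htdef]
      have := min_le_right t1 (ε * Real.sqrt (D i0))
      linarith
    have h2 : Real.sqrt (D i0) ≤ Real.sqrt (D i) := Real.sqrt_le_sqrt (hDmin i)
    have h3 : 0 < Real.sqrt (D i0) := Real.sqrt_pos.mpr (hDpos i0)
    nlinarith
  set s : ℝ := t / p with hsdef
  have hspos : 0 < s := by
    rw [hsdef]
    positivity
  refine ⟨(p : ℝ) ^ 2 * (κ ^ 2) ^ 2 / s ^ 2 + 1, by positivity, 1, one_pos, fun N hN => ?_⟩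
  have hNpos : (0 : ℝ) < N := by exact_mod_cast hN
  -- event inclusion
  set B : Ω → Matrix (Fin p) (Fin p) ℝ := fun ω => Matrix.of fun a b : Fin p =>
    (N : ℝ)⁻¹ * ∑ i ∈ Finset.range N, S i ω a * S i ω b with hBdef
  have hsub : {ω | ∃ i : Fin n, ε < |d N ω i / Real.sqrt N - Real.sqrt (D i)|} ⊆
      ⋃ a : Fin p, ⋃ b : Fin p, {ω | s ≤ |B ω a b - M a b|} := by
    intro ω hω
    by_contra hmem
    simp only [Set.mem_iUnion, Set.mem_setOf_eq, not_exists, not_le] at hmem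
    obtain ⟨i, hi⟩ := hω
    have hBh : (B ω).IsHermitian := by
      rw [Matrix.IsHermitian]
      ext a b
      simp only [Matrix.conjTranspose_apply, hBdef, Matrix.of_apply, star_trivial]
      congr 1
      exact Finset.sum_congr rfl fun k _ => mul_comm _ _
    have hclose : ∀ a b, |B ω a b - M a b| ≤ t / p := fun a b => (hmem a b).le
    have hmain := my_det_main hnp M (B ω) hBh D hDpos hDanti hMeig
      (fun i => (d N ω i) ^ 2 / N)
      (fun i => by positivity)
      (fun i j hij => by
        have h1 : d N ω j ≤ d N ω i := hdanti N ω hij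
        have h2 : 0 ≤ d N ω j := hd0 N ω j
        show d N ω j ^ 2 / (N : ℝ) ≤ d N ω i ^ 2 / (N : ℝ)
        gcongr)
      (hdchar N ω) t htpos hgap hDt hclose
    have hit := hmain i
    -- now derive the contradiction with hi
    set a : ℝ := d N ω i / Real.sqrt N with ha
    set b : ℝ := Real.sqrt (D i) with hb
    have ha0 : 0 ≤ a := by
      rw [ha]
      exact div_nonneg (hd0 N ω i) (Real.sqrt_nonneg _)
    have hb0 : 0 < b := Real.sqrt_pos.mpr (hDpos i)
    have ha2 : a ^ 2 = (d N ω i) ^ 2 / N := by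
      rw [ha, div_pow, Real.sq_sqrt hNpos.le]
    have hb2 : b ^ 2 = D i := Real.sq_sqrt (hDpos i).le
    have hprod : |a - b| * (a + b) = |a ^ 2 - b ^ 2| := by
      rw [← abs_of_nonneg (by linarith : 0 ≤ a + b), ← abs_mul]
      congr 1
      ring
    have hle : |a - b| * (a + b) ≤ t := by
      rw [hprod, ha2, hb2]
      exact hit
    have hab : |a - b| ≤ t / b := by
      rw [le_div_iff₀ hb0]
      calc |a - b| * b ≤ |a - b| * (a + b) := by
            apply mul_le_mul_of_nonneg_left (by linarith) (abs_nonneg _)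
        _ ≤ t := hle
    have : |a - b| ≤ ε := by
      refine hab.trans ?_
      rw [div_le_iff₀ hb0] at *
      have := htball i
      rw [hb]
      nlinarith [Real.sqrt_pos.mpr (hDpos i)]
    linarith [hi]
  -- probability bound on each entry event
  have hentry : ∀ a b : Fin p, μ {ω | s ≤ |B ω a b - M a b|} ≤
      ENNReal.ofReal ((κ ^ 2) ^ 2 / (s ^ 2 * N)) := by
    intro a b
    have hg : Measurable fun x : Fin p → ℝ => x a * x b :=
      (measurable_pi_apply a).mul (measurable_pi_apply b)
    have hYbd : ∀ i, ∀ᵐ ω ∂μ, |S i ω a * S i ω b| ≤ κ ^ 2 := by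
      intro i
      filter_upwards [hSabs i a, hSabs i b] with ω h1 h2
      calc |S i ω a * S i ω b| = |S i ω a| * |S i ω b| := abs_mul _ _
        _ ≤ κ * κ := mul_le_mul h1 h2 (abs_nonneg _) hκ0
        _ = κ ^ 2 := (sq κ).symm
    have := my_cheb μ (fun i ω => S i ω a * S i ω b)
      (fun i => hg.comp (hmeas i))
      (hindep.comp (fun _ => fun x => x a * x b) (fun _ => hg))
      (fun i => (hident i).comp hg)
      (κ ^ 2) (by positivity) hYbd (M a b) (hM a b).symm N hN s hspos
    exact this
  calc μ {ω | ∃ i : Fin n, ε < |d N ω i / Real.sqrt N - Real.sqrt (D i)|}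
      ≤ μ (⋃ a : Fin p, ⋃ b : Fin p, {ω | s ≤ |B ω a b - M a b|}) := measure_mono hsub
    _ ≤ ∑ a : Fin p, μ (⋃ b : Fin p, {ω | s ≤ |B ω a b - M a b|}) :=
        measure_iUnion_fintype_le μ _
    _ ≤ ∑ _a : Fin p, ∑ _b : Fin p, ENNReal.ofReal ((κ ^ 2) ^ 2 / (s ^ 2 * N)) := by
        refine Finset.sum_le_sum fun a _ => ?_
        refine le_trans (measure_iUnion_fintype_le μ _) ?_
        exact Finset.sum_le_sum fun b _ => hentry a b
    _ ≤ ENNReal.ofReal (((p : ℝ) ^ 2 * (κ ^ 2) ^ 2 / s ^ 2 + 1) * (N : ℝ) ^ (-(1 : ℝ))) := by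
        rw [Finset.sum_const, Finset.sum_const, Finset.card_univ, Fintype.card_fin,
          smul_smul, nsmul_eq_mul]
        rw [show ((p * p : ℕ) : ENNReal) = ENNReal.ofReal ((p : ℝ) * (p : ℝ)) by
          rw [← ENNReal.ofReal_natCast]; congr 1; push_cast; ring]
        rw [← ENNReal.ofReal_mul (by positivity)]
        apply ENNReal.ofReal_le_ofReal
        rw [Real.rpow_neg_one]
        calc (p : ℝ) * (p : ℝ) * ((κ ^ 2) ^ 2 / (s ^ 2 * N))
            = ((p : ℝ) * (p : ℝ) * ((κ ^ 2) ^ 2 / s ^ 2)) * (N : ℝ)⁻¹ := by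
              rw [div_mul_eq_div_div, div_eq_mul_inv]
              ring
          _ ≤ ((p : ℝ) ^ 2 * (κ ^ 2) ^ 2 / s ^ 2 + 1) * (N : ℝ)⁻¹ := by
              refine mul_le_mul_of_nonneg_right ?_ (inv_nonneg.mpr hNpos.le)
              have heq2 : (p : ℝ) * p * ((κ ^ 2) ^ 2 / s ^ 2)
                  = (p : ℝ) ^ 2 * (κ ^ 2) ^ 2 / s ^ 2 := by ring
              rw [heq2]
              linarith
end

section
/- Let S_1, S_2, … be an i.i.d. sequence of random vectors in ℝ^p with E[S_i] = 0 and ‖S_i‖₂ ≤ κ almost surely, whose second-moment matrix M = E[S_i S_iᵀ] has rank n with simple nonzero eigenvalues D_1 > … > D_n > 0. Then there exist constants C, c > 0 such that for all N, with probability at least 1 − N^{−c}, every unit right singular vector v ∈ ℝ^N of S_samp = [S_1, …, S_N] associated with any of the n largest singular values satisfies max_{1≤j≤N} |v(j)| ≤ C √(log N) / √N. -/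
open MeasureTheory ProbabilityTheory Matrix Polynomial

lemma rsvd_charpoly_eval {p : ℕ} (A : Matrix (Fin p) (Fin p) ℝ) (x : ℝ) :
    A.charpoly.eval x = (x • (1 : Matrix (Fin p) (Fin p) ℝ) - A).det := by
  rw [Matrix.charpoly, ← Polynomial.coe_evalRingHom, RingHom.map_det]
  congr 1
  ext i j
  by_cases h : i = j
  · subst h
    simp [Matrix.map_apply, Matrix.sub_apply, Matrix.smul_apply, Matrix.one_apply_eq]
  · simp [Matrix.map_apply, charmatrix_apply_ne _ _ _ h, Matrix.sub_apply, Matrix.smul_apply,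
      Matrix.one_apply_ne h]

lemma rsvd_det_add_smul_one {p n : ℕ} (hnp : n ≤ p) (A : Matrix (Fin p) (Fin p) ℝ)
    (r : Fin n → ℝ)
    (hchar : A.charpoly = (∏ i : Fin n, (X - C (r i))) * X ^ (p - n)) (t : ℝ) :
    (A + t • 1).det = (∏ i, (r i + t)) * t ^ (p - n) := by
  have h := rsvd_charpoly_eval A (-t)
  rw [hchar] at h
  have hL : (-t) • (1 : Matrix (Fin p) (Fin p) ℝ) - A = -(A + t • 1) := by
    rw [neg_smul]; abel
  rw [hL, Matrix.det_neg] at h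
  simp only [eval_mul, eval_prod, eval_pow, eval_sub, eval_X, eval_C] at h
  have h2 : (∏ i : Fin n, (-t - r i)) = (-1 : ℝ) ^ n * ∏ i, (r i + t) := by
    simp only [show ∀ i : Fin n, -t - r i = -1 * (r i + t) from fun i => by ring,
      Finset.prod_mul_distrib, Finset.prod_const, Finset.card_univ, Fintype.card_fin]
  rw [h2, Fintype.card_fin, neg_pow t] at h
  have hcancel : ((-1 : ℝ) ^ p) * ((∏ i, (r i + t)) * t ^ (p - n)) =
      (-1 : ℝ) ^ n * (∏ i, (r i + t)) * ((-1) ^ (p - n) * t ^ (p - n)) := by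
    rw [show (-1 : ℝ) ^ n * (∏ i, (r i + t)) * ((-1) ^ (p - n) * t ^ (p - n))
        = ((-1 : ℝ) ^ n * (-1) ^ (p - n)) * ((∏ i, (r i + t)) * t ^ (p - n)) by ring,
      ← pow_add, Nat.add_sub_cancel' hnp]
  have := h.symm.trans hcancel.symm
  exact mul_left_cancel₀ (pow_ne_zero p (by norm_num : (-1:ℝ) ≠ 0)) this
lemma rsvd_root_le {p N : ℕ} (hN : 0 < N) (Smat : Matrix (Fin p) (Fin N) ℝ) (κ r : ℝ)
    (hr : 0 ≤ r) (hcol : ∀ j, ∑ a, (Smat a j) ^ 2 ≤ κ ^ 2)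
    (hdet : (r • (1 : Matrix (Fin p) (Fin p) ℝ) - (N : ℝ)⁻¹ • (Smat * Smatᵀ)).det = 0) :
    r ≤ κ ^ 2 := by
  obtain ⟨v, hv0, hveq⟩ := (Matrix.exists_mulVec_eq_zero_iff).mpr hdet
  have heig : ((N : ℝ)⁻¹ • (Smat * Smatᵀ)).mulVec v = r • v := by
    have := hveq
    rw [Matrix.sub_mulVec, Matrix.smul_mulVec, Matrix.one_mulVec, sub_eq_zero] at this
    exact this.symm
  have hvv : 0 < ∑ a, v a ^ 2 := by
    obtain ⟨a, ha⟩ := Function.ne_iff.mp hv0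
    refine Finset.sum_pos' (fun b _ => sq_nonneg _) ⟨a, Finset.mem_univ a, ?_⟩
    exact pow_pos (abs_pos.mpr ha) 2 |>.trans_eq (sq_abs _)
  set u : Fin N → ℝ := v ᵥ* Smat with hu
  have hq1 : v ⬝ᵥ (((N : ℝ)⁻¹ • (Smat * Smatᵀ)).mulVec v) = r * ∑ a, v a ^ 2 := by
    rw [heig]
    simp only [dotProduct, Pi.smul_apply, smul_eq_mul, sq, Finset.mul_sum]
    exact Finset.sum_congr rfl fun a _ => by ring
  have hq2 : v ⬝ᵥ (((N : ℝ)⁻¹ • (Smat * Smatᵀ)).mulVec v) = (N : ℝ)⁻¹ * ∑ j, u j ^ 2 := by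
    rw [Matrix.smul_mulVec, dotProduct_smul, ← Matrix.mulVec_mulVec,
      Matrix.dotProduct_mulVec, Matrix.mulVec_transpose]
    simp only [smul_eq_mul, hu]
    congr 1
    simp [dotProduct, sq]
  have hub : ∀ j, u j ^ 2 ≤ (∑ a, v a ^ 2) * κ ^ 2 := by
    intro j
    have := Finset.sum_mul_sq_le_sq_mul_sq Finset.univ (fun a => v a) (fun a => Smat a j)
    have hu2 : u j = ∑ a, v a * Smat a j := by
      simp [hu, Matrix.vecMul, dotProduct]
    rw [hu2]
    exact this.trans (by
      have := hcol j
      have h1 : (0:ℝ) ≤ ∑ a, v a ^ 2 := Finset.sum_nonneg fun _ _ => sq_nonneg _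
      exact mul_le_mul_of_nonneg_left (hcol j) h1)
  have hsum : ∑ j, u j ^ 2 ≤ N * ((∑ a, v a ^ 2) * κ ^ 2) := by
    calc ∑ j, u j ^ 2 ≤ ∑ _j : Fin N, (∑ a, v a ^ 2) * κ ^ 2 :=
          Finset.sum_le_sum fun j _ => hub j
      _ = N * ((∑ a, v a ^ 2) * κ ^ 2) := by simp [Finset.sum_const, Finset.card_univ]
  have hfinal : r * ∑ a, v a ^ 2 ≤ κ ^ 2 * ∑ a, v a ^ 2 := by
    rw [← hq1, hq2]
    calc (N : ℝ)⁻¹ * ∑ j, u j ^ 2 ≤ (N : ℝ)⁻¹ * (N * ((∑ a, v a ^ 2) * κ ^ 2)) := by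
          apply mul_le_mul_of_nonneg_left hsum
          positivity
      _ = κ ^ 2 * ∑ a, v a ^ 2 := by
          field_simp
  exact le_of_mul_le_mul_right hfinal hvv

lemma rsvd_factor_lower {n : ℕ} (f : Fin n → ℝ) (K c : ℝ) (hf0 : ∀ i, 0 < f i)
    (hfK : ∀ i, f i ≤ K) (hc : 0 < c) (hprod : c ≤ ∏ i, f i) (i : Fin n) :
    c / K ^ (n - 1) ≤ f i := by
  have hK0 : 0 < K := (hf0 i).trans_le (hfK i)
  set B := ∏ j ∈ Finset.univ.erase i, f j with hB
  have hB0 : 0 < B := Finset.prod_pos fun j _ => hf0 j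
  have hBK : B ≤ K ^ (n - 1) := by
    calc B ≤ ∏ _j ∈ Finset.univ.erase i, K :=
          Finset.prod_le_prod (fun j _ => (hf0 j).le) (fun j _ => hfK j)
      _ = K ^ (n - 1) := by
          rw [Finset.prod_const, Finset.card_erase_of_mem (Finset.mem_univ i),
            Finset.card_univ, Fintype.card_fin]
  have hsplit : (∏ j, f j) = f i * B := (Finset.mul_prod_erase Finset.univ f (Finset.mem_univ i)).symm
  have h1 : c / B ≤ f i := by
    rw [div_le_iff₀ hB0]
    rw [hsplit] at hprod
    exact hprod
  calc c / K ^ (n - 1) ≤ c / B := by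
        apply div_le_div_of_nonneg_left hc.le hB0 hBK
    _ ≤ f i := h1

lemma rsvd_deloc {p N : ℕ} (Smat : Matrix (Fin p) (Fin N) ℝ) (κ θ : ℝ) (hκ : 0 ≤ κ)
    (hcol : ∀ j, ∑ a, (Smat a j) ^ 2 ≤ κ ^ 2) (v : Fin N → ℝ) (hv : ∑ j, v j ^ 2 = 1)
    (e : ℝ) (hθ : 0 < θ) (he : θ ≤ e)
    (heig : (Smatᵀ * Smat).mulVec v = e • v) (j : Fin N) :
    |v j| ≤ κ / Real.sqrt θ := by
  have he0 : 0 < e := hθ.trans_le he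
  set w : Fin p → ℝ := Smat.mulVec v with hwdef
  have hw : ∑ a, w a ^ 2 = e := by
    have h1 : ∑ a, w a ^ 2 = w ⬝ᵥ w := by simp [dotProduct, sq]
    rw [h1, hwdef, Matrix.dotProduct_mulVec, ← Matrix.mulVec_transpose,
      Matrix.mulVec_mulVec, heig]
    simp only [dotProduct, Pi.smul_apply, smul_eq_mul]
    calc ∑ x, e * v x * v x = e * ∑ x, v x ^ 2 := by
          rw [Finset.mul_sum]; exact Finset.sum_congr rfl fun x _ => by ring
      _ = e := by rw [hv, mul_one]
  have key : e * v j = ∑ a, Smat a j * w a := by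
    have := congrFun heig j
    rw [← Matrix.mulVec_mulVec] at this
    simp only [Pi.smul_apply, smul_eq_mul] at this
    rw [← this]
    simp [Matrix.mulVec, dotProduct, Matrix.transpose_apply, hwdef]
  have h2 : (e * v j) ^ 2 ≤ κ ^ 2 * e := by
    rw [key]
    calc (∑ a, Smat a j * w a) ^ 2 ≤ (∑ a, Smat a j ^ 2) * (∑ a, w a ^ 2) :=
          Finset.sum_mul_sq_le_sq_mul_sq Finset.univ _ _
      _ ≤ κ ^ 2 * e := by
          rw [hw]
          exact mul_le_mul_of_nonneg_right (hcol j) he0.le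
  have h3 : v j ^ 2 ≤ κ ^ 2 / θ := by
    have h4 : e ^ 2 * v j ^ 2 ≤ κ ^ 2 * e := by nlinarith [h2]
    have h5 : v j ^ 2 ≤ κ ^ 2 / e := by
      rw [le_div_iff₀ he0]
      nlinarith [sq_nonneg (v j)]
    exact h5.trans (div_le_div_of_nonneg_left (by positivity) hθ he)
  calc |v j| = Real.sqrt (v j ^ 2) := (Real.sqrt_sq_eq_abs _).symm
    _ ≤ Real.sqrt (κ ^ 2 / θ) := Real.sqrt_le_sqrt h3
    _ = κ / Real.sqrt θ := by
        rw [Real.sqrt_div (sq_nonneg κ), Real.sqrt_sq hκ]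

lemma rsvd_bridge {p n : ℕ} (hnp : n ≤ p) {N : ℕ} (hN : 0 < N)
    (M : Matrix (Fin p) (Fin p) ℝ) (D : Fin n → ℝ) (hD0 : ∀ i, 0 < D i)
    (hMeig : M.charpoly = (∏ i : Fin n, (X - C (D i))) * X ^ (p - n))
    (κ t ε2 : ℝ) (hκ : 0 ≤ κ) (ht0 : 0 < t) (ht1 : t ≤ 1)
    (htδ : t ≤ (∏ i, D i) / (4 * (κ ^ 2 + 1) ^ (n - 1)))
    (hε2 : ∀ x : Fin p → Fin p → ℝ, dist x (fun a b => M a b) < ε2 →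
      |(Matrix.of x + t • 1).det - (M + t • 1).det| < (∏ i, D i) * t ^ (p - n) / 2)
    (Sm : Matrix (Fin p) (Fin N) ℝ) (r : Fin n → ℝ) (hr0 : ∀ i, 0 ≤ r i)
    (hcol : ∀ j, ∑ a, (Sm a j) ^ 2 ≤ κ ^ 2)
    (hcharA : ((N : ℝ)⁻¹ • (Sm * Smᵀ)).charpoly = (∏ i : Fin n, (X - C (r i))) * X ^ (p - n))
    (hclose : ∀ a b, |((N : ℝ)⁻¹ • (Sm * Smᵀ)) a b - M a b| < ε2)
    (i : Fin n) : (∏ i, D i) / (4 * (κ ^ 2 + 1) ^ (n - 1)) ≤ r i := by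
  set A : Matrix (Fin p) (Fin p) ℝ := (N : ℝ)⁻¹ • (Sm * Smᵀ) with hA
  set Q : ℝ := ∏ i, D i with hQdef
  have hQ : 0 < Q := Finset.prod_pos fun j _ => hD0 j
  set K : ℝ := κ ^ 2 + 1 with hKdef
  have hK1 : (0:ℝ) < K := by positivity
  set δ : ℝ := Q / (4 * K ^ (n - 1)) with hδdef
  have hδ0 : 0 < δ := by positivity
  -- ε2 positive
  have hp0 : 0 < p := lt_of_lt_of_le i.pos hnp
  have hε2pos : 0 < ε2 := (abs_nonneg _).trans_lt (hclose ⟨0, hp0⟩ ⟨0, hp0⟩)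
  -- determinant formulas
  have hdetA : (A + t • 1).det = (∏ j, (r j + t)) * t ^ (p - n) :=
    rsvd_det_add_smul_one hnp A r hcharA t
  have hdetM : (M + t • 1).det = (∏ j, (D j + t)) * t ^ (p - n) :=
    rsvd_det_add_smul_one hnp M D hMeig t
  -- distance bound
  have hdist : dist (fun a b => A a b : Fin p → Fin p → ℝ) (fun a b => M a b) < ε2 := by
    rw [dist_pi_lt_iff hε2pos]
    intro a
    rw [dist_pi_lt_iff hε2pos]
    intro b
    rw [Real.dist_eq]
    exact hclose a b
  have hdet_close := hε2 _ hdist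
  have hofA : Matrix.of (fun a b => A a b : Fin p → Fin p → ℝ) = A := rfl
  rw [hofA, hdetA, hdetM] at hdet_close
  -- products
  have htpow : 0 < t ^ (p - n) := pow_pos ht0 _
  have hprodD : Q ≤ ∏ j, (D j + t) :=
    Finset.prod_le_prod (fun j _ => (hD0 j).le) (fun j _ => by linarith [ht0])
  have hprodr : Q / 2 ≤ ∏ j, (r j + t) := by
    have h1 : |(∏ j, (r j + t)) - ∏ j, (D j + t)| * t ^ (p - n) < Q * t ^ (p - n) / 2 := by
      calc |(∏ j, (r j + t)) - ∏ j, (D j + t)| * t ^ (p - n)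
          = |((∏ j, (r j + t)) * t ^ (p - n)) - (∏ j, (D j + t)) * t ^ (p - n)| := by
            rw [← sub_mul, abs_mul, abs_of_pos htpow]
        _ < Q * t ^ (p - n) / 2 := hdet_close
    have h2 : |(∏ j, (r j + t)) - ∏ j, (D j + t)| < Q / 2 := by
      by_contra hcon
      push_neg at hcon
      have := mul_le_mul_of_nonneg_right hcon htpow.le
      rw [div_mul_eq_mul_div] at this
      linarith
    have := abs_lt.mp h2
    linarith [hprodD]
  -- each factor bounded above by K and positive
  have hrK : ∀ j, r j ≤ κ ^ 2 := by
    intro j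
    apply rsvd_root_le hN Sm κ (r j) (hr0 j) hcol
    have hz : A.charpoly.eval (r j) = 0 := by
      rw [hcharA]
      simp only [eval_mul, eval_prod, eval_pow, eval_sub, eval_X, eval_C]
      rw [Finset.prod_eq_zero (Finset.mem_univ j) (sub_self (r j))]
      ring
    rw [rsvd_charpoly_eval] at hz
    exact hz
  have hfac0 : ∀ j, 0 < r j + t := fun j => add_pos_of_nonneg_of_pos (hr0 j) ht0
  have hfacK : ∀ j, r j + t ≤ K := fun j => by
    have := hrK j; rw [hKdef]; linarith
  have hmain := rsvd_factor_lower (fun j => r j + t) K (Q / 2) hfac0 hfacK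
    (by positivity) hprodr i
  have h2δ : (Q / 2) / K ^ (n - 1) = 2 * δ := by
    rw [hδdef]; field_simp; ring
  rw [h2δ] at hmain
  linarith [htδ, hmain]

lemma rsvd_cheb {Ω : Type*} [MeasurableSpace Ω] (μ : Measure Ω) [IsProbabilityMeasure μ]
    {p : ℕ} (κ : ℝ) (hκ0 : 0 ≤ κ) (S : ℕ → Ω → Fin p → ℝ) (hmeas : ∀ i, Measurable (S i))
    (hindep : iIndepFun S μ)
    (hident : ∀ i, IdentDistrib (S i) (S 0) μ μ)
    (hbound : ∀ i, ∀ᵐ ω ∂μ, Real.sqrt (∑ k, (S i ω k) ^ 2) ≤ κ)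
    (M : Matrix (Fin p) (Fin p) ℝ)
    (hM : ∀ a b, M a b = ∫ ω, S 0 ω a * S 0 ω b ∂μ)
    (a b : Fin p) (N : ℕ) (hN : 0 < N) (ε : ℝ) (hε : 0 < ε) :
    μ {ω | ε ≤ |(N : ℝ)⁻¹ * (∑ j ∈ Finset.range N, S j ω a * S j ω b) - M a b|}
      ≤ ENNReal.ofReal (κ ^ 4 / (N * ε ^ 2)) := by
  have hNR : (0:ℝ) < N := Nat.cast_pos.mpr hN
  -- coordinate bound
  have habs : ∀ (i : ℕ) (k : Fin p), ∀ᵐ ω ∂μ, |S i ω k| ≤ κ := by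
    intro i k
    filter_upwards [hbound i] with ω hω
    calc |S i ω k| = Real.sqrt ((S i ω k) ^ 2) := (Real.sqrt_sq_eq_abs _).symm
      _ ≤ Real.sqrt (∑ l, (S i ω l) ^ 2) :=
          Real.sqrt_le_sqrt (Finset.single_le_sum (f := fun l => (S i ω l) ^ 2) (fun l _ => sq_nonneg _) (Finset.mem_univ k))
      _ ≤ κ := hω
  set g : (Fin p → ℝ) → ℝ := fun x => x a * x b with hg_def
  have hg : Measurable g := (measurable_pi_apply a).mul (measurable_pi_apply b)
  set X : ℕ → Ω → ℝ := fun j ω => S j ω a * S j ω b with hX_def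
  have hXm : ∀ j, Measurable (X j) := fun j => hg.comp (hmeas j)
  have hXbd : ∀ j, ∀ᵐ ω ∂μ, ‖X j ω‖ ≤ κ ^ 2 := by
    intro j
    filter_upwards [habs j a, habs j b] with ω h1 h2
    calc ‖X j ω‖ = |S j ω a| * |S j ω b| := by rw [Real.norm_eq_abs, abs_mul]
      _ ≤ κ * κ := mul_le_mul h1 h2 (abs_nonneg _) hκ0
      _ = κ ^ 2 := (sq κ).symm
  have hXmem : ∀ j, MemLp (X j) 2 μ := fun j =>
    MemLp.of_bound (hXm j).aestronglyMeasurable _ (hXbd j)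
  have hXid : ∀ j, IdentDistrib (X j) (X 0) μ μ := fun j => (hident j).comp hg
  have hXint : ∀ j, ∫ ω, X j ω ∂μ = M a b := by
    intro j
    rw [(hXid j).integral_eq, hM a b]
  have hXvar : ∀ j, variance (X j) μ ≤ κ ^ 4 := by
    intro j
    rw [(hXid j).variance_eq]
    refine (variance_le_expectation_sq (hXm 0).aestronglyMeasurable).trans ?_
    have hint : Integrable (fun ω => X 0 ω ^ 2) μ := (hXmem 0).integrable_sq
    have hb : ∀ᵐ ω ∂μ, X 0 ω ^ 2 ≤ κ ^ 4 := by
      filter_upwards [hXbd 0] with ω hω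
      calc X 0 ω ^ 2 = ‖X 0 ω‖ ^ 2 := by rw [Real.norm_eq_abs, sq_abs]
        _ ≤ (κ ^ 2) ^ 2 := by
            apply pow_le_pow_left₀ (norm_nonneg _) hω
        _ = κ ^ 4 := by ring
    calc μ[(X 0) ^ 2] = ∫ ω, X 0 ω ^ 2 ∂μ := rfl
      _ ≤ ∫ _ω, κ ^ 4 ∂μ := integral_mono_ae hint (integrable_const _) hb
      _ = κ ^ 4 := by simp
  set T : Ω → ℝ := ∑ j ∈ Finset.range N, X j with hT_def
  have hTmem : MemLp T 2 μ := memLp_finset_sum' _ fun j _ => hXmem j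
  have hTvar : variance T μ ≤ N * κ ^ 4 := by
    rw [IndepFun.variance_sum (fun j _ => hXmem j)
      (fun j _ k _ hjk => ((hindep.indepFun hjk).comp hg hg))]
    calc ∑ j ∈ Finset.range N, variance (X j) μ ≤ ∑ _j ∈ Finset.range N, κ ^ 4 :=
          Finset.sum_le_sum fun j _ => hXvar j
      _ = N * κ ^ 4 := by simp [Finset.sum_const, Finset.card_range]
  have hTint : ∫ ω, T ω ∂μ = N * M a b := by
    rw [hT_def]
    have : ∫ ω, (∑ j ∈ Finset.range N, X j) ω ∂μ = ∑ j ∈ Finset.range N, ∫ ω, X j ω ∂μ := by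
      simp only [Finset.sum_apply]
      exact integral_finset_sum _ fun j _ => (hXmem j).integrable one_le_two
    rw [this]
    simp [hXint, Finset.sum_const, Finset.card_range]
  have hcheb := meas_ge_le_variance_div_sq (μ := μ) hTmem (c := N * ε) (by positivity)
  refine le_trans (measure_mono ?_) (hcheb.trans ?_)
  · intro ω hω
    simp only [Set.mem_setOf_eq] at hω ⊢
    have hTω : T ω = ∑ j ∈ Finset.range N, S j ω a * S j ω b := by
      simp [hT_def, hX_def, Finset.sum_apply]
    rw [hTint, hTω]
    have h2 : (N:ℝ) * ε ≤ (N:ℝ) * |(N : ℝ)⁻¹ * (∑ j ∈ Finset.range N, S j ω a * S j ω b) - M a b| :=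
      mul_le_mul_of_nonneg_left hω hNR.le
    calc (N:ℝ) * ε ≤ (N:ℝ) * |(N : ℝ)⁻¹ * (∑ j ∈ Finset.range N, S j ω a * S j ω b) - M a b| := h2
      _ = |(∑ j ∈ Finset.range N, S j ω a * S j ω b) - N * M a b| := by
          nth_rewrite 1 [← abs_of_pos hNR]; rw [← abs_mul]
          congr 1
          field_simp
  · apply ENNReal.ofReal_le_ofReal
    have h3 : ((N:ℝ) * ε) ^ 2 = N ^ 2 * ε ^ 2 := by ring
    calc variance T μ / ((N:ℝ) * ε) ^ 2 ≤ (N * κ ^ 4) / ((N:ℝ) * ε) ^ 2 := by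
          apply div_le_div_of_nonneg_right hTvar (by positivity)
      _ = κ ^ 4 / (N * ε ^ 2) := by
          rw [h3]; field_simp

/-- delocalization of right singular vectors.  In the setting of the
manifold signal model (i.i.d. bounded centered vectors whose second-moment matrix `M`
has simple nonzero eigenvalues `D_1 > … > D_n > 0`), there are `C, c > 0` such that for
all `N ≥ 1`, with probability at least `1 − N^{−c}`, every unit right singular vector
of `S_samp = [S_1, …, S_N]` associated with one of the `n` largest singular values
`d N ω i` satisfies `max_j |v(j)| ≤ C √(log N)/√N`. -/
theorem right_singular_vector_delocalization
    {Ω : Type*} [MeasurableSpace Ω] (μ : Measure Ω) [IsProbabilityMeasure μ]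
    (p n : ℕ) (hnp : n ≤ p) (κ : ℝ)
    (S : ℕ → Ω → Fin p → ℝ) (hmeas : ∀ i, Measurable (S i))
    (hindep : iIndepFun S μ)
    (hident : ∀ i, IdentDistrib (S i) (S 0) μ μ)
    (hcent : ∀ k, ∫ ω, S 0 ω k ∂μ = 0)
    (hbound : ∀ i, ∀ᵐ ω ∂μ, Real.sqrt (∑ k, (S i ω k) ^ 2) ≤ κ)
    (M : Matrix (Fin p) (Fin p) ℝ)
    (hM : ∀ a b, M a b = ∫ ω, S 0 ω a * S 0 ω b ∂μ)
    (D : Fin n → ℝ) (hDpos : ∀ i, 0 < D i) (hDanti : StrictAnti D)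
    (hMeig : M.charpoly = (∏ i : Fin n, (X - C (D i))) * X ^ (p - n))
    (Smat : (N : ℕ) → Ω → Matrix (Fin p) (Fin N) ℝ)
    (hSmat : ∀ (N : ℕ) (ω : Ω) (a : Fin p) (j : Fin N), Smat N ω a j = S j ω a)
    (d : (N : ℕ) → Ω → Fin n → ℝ)
    (hd0 : ∀ N ω i, 0 ≤ d N ω i)
    (hdanti : ∀ N ω, Antitone (d N ω))
    (hdchar : ∀ (N : ℕ) (ω : Ω),
      ((N : ℝ)⁻¹ • (Smat N ω * (Smat N ω)ᵀ)).charpoly =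
        (∏ i : Fin n, (X - C ((d N ω i) ^ 2 / N))) * X ^ (p - n)) :
    ∃ C : ℝ, 0 < C ∧ ∃ c : ℝ, 0 < c ∧ ∀ N : ℕ, 1 ≤ N →
      1 - ENNReal.ofReal ((N : ℝ) ^ (-c)) ≤
        μ {ω | ∀ (i : Fin n) (v : Fin N → ℝ), (∑ j, (v j) ^ 2 = 1) →
          ((Smat N ω)ᵀ * Smat N ω).mulVec v = ((d N ω i) ^ 2) • v →
          ∀ j : Fin N, |v j| ≤ C * Real.sqrt (Real.log N) / Real.sqrt N} := by
  classical
  -- κ is nonnegative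
  have hμ0 : μ ≠ 0 := IsProbabilityMeasure.ne_zero μ
  haveI : (MeasureTheory.ae μ).NeBot := ae_neBot.mpr hμ0
  obtain ⟨ω₀, hω₀⟩ := (hbound 0).exists
  have hκ0 : 0 ≤ κ := (Real.sqrt_nonneg _).trans hω₀
  rcases Nat.eq_zero_or_pos n with hn | hn
  · -- degenerate case n = 0
    subst hn
    refine ⟨1, one_pos, 1, one_pos, fun N _ => ?_⟩
    have huniv : {ω : Ω | ∀ (i : Fin 0) (v : Fin N → ℝ), (∑ j, (v j) ^ 2 = 1) →
        ((Smat N ω)ᵀ * Smat N ω).mulVec v = ((d N ω i) ^ 2) • v →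
        ∀ j : Fin N, |v j| ≤ 1 * Real.sqrt (Real.log N) / Real.sqrt N} = Set.univ :=
      Set.eq_univ_of_forall fun ω i => i.elim0
    rw [huniv, measure_univ]
    exact tsub_le_self
  -- main case
  have hp0 : 0 < p := hn.trans_le hnp
  set Q : ℝ := ∏ i, D i with hQdef
  have hQ : 0 < Q := Finset.prod_pos fun j _ => hDpos j
  set K : ℝ := κ ^ 2 + 1 with hKdef
  have hK0 : (0:ℝ) < K := by positivity
  set δ : ℝ := Q / (4 * K ^ (n - 1)) with hδdef
  have hδ0 : 0 < δ := by positivity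
  set t : ℝ := min 1 δ with htdef
  have ht0 : 0 < t := lt_min one_pos hδ0
  have ht1 : t ≤ 1 := min_le_left _ _
  have htδ : t ≤ δ := min_le_right _ _
  have hη : 0 < Q * t ^ (p - n) / 2 := by positivity
  -- continuity of the shifted determinant
  have hF : Continuous (fun x : Fin p → Fin p → ℝ =>
      (Matrix.of x + t • (1 : Matrix (Fin p) (Fin p) ℝ)).det) := by
    apply Continuous.matrix_det
    exact continuous_id.add continuous_const
  obtain ⟨ε2, hε2pos, hε2⟩ := Metric.continuousAt_iff.mp
    (hF.continuousAt (x := fun a b => M a b)) (Q * t ^ (p - n) / 2) hη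
  have hbridge_eps : ∀ x : Fin p → Fin p → ℝ, dist x (fun a b => M a b) < ε2 →
      |(Matrix.of x + t • 1).det - (M + t • 1).det| < (∏ i, D i) * t ^ (p - n) / 2 := by
    intro x hx
    have h := hε2 hx
    rw [Real.dist_eq] at h
    exact h
  set R : ℝ := (p : ℝ) ^ 2 * κ ^ 4 / ε2 ^ 2 with hRdef
  have hR0 : 0 ≤ R := by positivity
  set N₀ : ℕ := max 2 (⌈R ^ 2⌉₊ + 1) with hN₀def
  have hN₀2 : 2 ≤ N₀ := le_max_left _ _
  have hlog2 : 0 < Real.log 2 := Real.log_pos one_lt_two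
  have hslog2 : 0 < Real.sqrt (Real.log 2) := Real.sqrt_pos.mpr hlog2
  set C : ℝ := max (Real.sqrt N₀ / Real.sqrt (Real.log 2))
      (κ / (Real.sqrt δ * Real.sqrt (Real.log 2))) + 1 with hCdef
  have hmax0 : 0 ≤ Real.sqrt N₀ / Real.sqrt (Real.log 2) := by positivity
  have hC0 : 0 < C := by
    have := le_max_left (Real.sqrt N₀ / Real.sqrt (Real.log 2))
      (κ / (Real.sqrt δ * Real.sqrt (Real.log 2)))
    rw [hCdef]; linarith
  have hlogN : ∀ N : ℕ, 2 ≤ N → Real.sqrt (Real.log 2) ≤ Real.sqrt (Real.log N) := by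
    intro N hN
    apply Real.sqrt_le_sqrt
    apply Real.log_le_log (by norm_num)
    exact_mod_cast hN
  have fact1 : ∀ N : ℕ, 2 ≤ N → N ≤ N₀ → (1:ℝ) ≤ C * Real.sqrt (Real.log N) / Real.sqrt N := by
    intro N hN2 hNle
    have hsN : 0 < Real.sqrt N := Real.sqrt_pos.mpr (by positivity)
    rw [le_div_iff₀ hsN, one_mul]
    have h1 : Real.sqrt N ≤ Real.sqrt N₀ := Real.sqrt_le_sqrt (by exact_mod_cast hNle)
    have h2 : Real.sqrt N₀ ≤ C * Real.sqrt (Real.log 2) := by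
      have h3 : Real.sqrt N₀ / Real.sqrt (Real.log 2) ≤ C := by
        rw [hCdef]
        have := le_max_left (Real.sqrt N₀ / Real.sqrt (Real.log 2))
          (κ / (Real.sqrt δ * Real.sqrt (Real.log 2)))
        linarith
      calc Real.sqrt N₀ = (Real.sqrt N₀ / Real.sqrt (Real.log 2)) * Real.sqrt (Real.log 2) := by
            field_simp
        _ ≤ C * Real.sqrt (Real.log 2) := mul_le_mul_of_nonneg_right h3 hslog2.le
    calc Real.sqrt N ≤ C * Real.sqrt (Real.log 2) := h1.trans h2
      _ ≤ C * Real.sqrt (Real.log N) := mul_le_mul_of_nonneg_left (hlogN N hN2) hC0.le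
  have fact2 : ∀ N : ℕ, 2 ≤ N → κ / Real.sqrt δ ≤ C * Real.sqrt (Real.log N) := by
    intro N hN2
    have h3 : κ / (Real.sqrt δ * Real.sqrt (Real.log 2)) ≤ C := by
      rw [hCdef]
      have := le_max_right (Real.sqrt N₀ / Real.sqrt (Real.log 2))
        (κ / (Real.sqrt δ * Real.sqrt (Real.log 2)))
      linarith
    have hsδ : 0 < Real.sqrt δ := Real.sqrt_pos.mpr hδ0
    calc κ / Real.sqrt δ = (κ / (Real.sqrt δ * Real.sqrt (Real.log 2))) * Real.sqrt (Real.log 2) := by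
          field_simp
      _ ≤ C * Real.sqrt (Real.log 2) := mul_le_mul_of_nonneg_right h3 hslog2.le
      _ ≤ C * Real.sqrt (Real.log N) := mul_le_mul_of_nonneg_left (hlogN N hN2) hC0.le
  refine ⟨C, hC0, 1/2, by norm_num, fun N hN1 => ?_⟩
  rcases eq_or_lt_of_le hN1 with h1 | h1
  · -- N = 1
    rw [← h1]
    simp only [Nat.cast_one, Real.one_rpow, ENNReal.ofReal_one, tsub_self]
    exact zero_le
  have hN2 : 2 ≤ N := h1
  by_cases hcase : N < N₀
  · -- small N: trivial bound
    have huniv : {ω : Ω | ∀ (i : Fin n) (v : Fin N → ℝ), (∑ j, (v j) ^ 2 = 1) →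
        ((Smat N ω)ᵀ * Smat N ω).mulVec v = ((d N ω i) ^ 2) • v →
        ∀ j : Fin N, |v j| ≤ C * Real.sqrt (Real.log N) / Real.sqrt N} = Set.univ := by
      apply Set.eq_univ_of_forall
      intro ω i v hv _ j
      have hvj : v j ^ 2 ≤ 1 := by
        rw [← hv]
        exact Finset.single_le_sum (f := fun k => v k ^ 2) (fun k _ => sq_nonneg _)
          (Finset.mem_univ j)
      have h1 : |v j| ≤ 1 := by
        calc |v j| = Real.sqrt (v j ^ 2) := (Real.sqrt_sq_eq_abs _).symm
          _ ≤ Real.sqrt 1 := Real.sqrt_le_sqrt hvj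
          _ = 1 := Real.sqrt_one
      exact h1.trans (fact1 N hN2 hcase.le)
    rw [huniv, measure_univ]
    exact tsub_le_self
  push_neg at hcase
  have hNpos : 0 < N := by omega
  set G1 : Set Ω := {ω | ∀ j : Fin N, Real.sqrt (∑ k, (S (j:ℕ) ω k) ^ 2) ≤ κ} with hG1def
  set G2 : Set Ω := {ω | ∀ a b : Fin p,
    |(N : ℝ)⁻¹ * (∑ j ∈ Finset.range N, S j ω a * S j ω b) - M a b| < ε2} with hG2def
  have hsub : G1 ∩ G2 ⊆ {ω : Ω | ∀ (i : Fin n) (v : Fin N → ℝ), (∑ j, (v j) ^ 2 = 1) →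
      ((Smat N ω)ᵀ * Smat N ω).mulVec v = ((d N ω i) ^ 2) • v →
      ∀ j : Fin N, |v j| ≤ C * Real.sqrt (Real.log N) / Real.sqrt N} := by
    rintro ω ⟨hω1, hω2⟩
    intro i v hv heig j
    have hcol : ∀ j' : Fin N, ∑ a, (Smat N ω a j') ^ 2 ≤ κ ^ 2 := by
      intro j'
      have h1 := hω1 j'
      have h2 : ∑ a, (Smat N ω a j') ^ 2 = ∑ k, (S (j':ℕ) ω k) ^ 2 :=
        Finset.sum_congr rfl fun a _ => by rw [hSmat]
      rw [h2]
      have hnn : 0 ≤ ∑ k, (S (j':ℕ) ω k) ^ 2 := Finset.sum_nonneg fun _ _ => sq_nonneg _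
      calc ∑ k, (S (j':ℕ) ω k) ^ 2
          = (Real.sqrt (∑ k, (S (j':ℕ) ω k) ^ 2)) ^ 2 := (Real.sq_sqrt hnn).symm
        _ ≤ κ ^ 2 := pow_le_pow_left₀ (Real.sqrt_nonneg _) h1 2
    have hclose : ∀ a b, |((N : ℝ)⁻¹ • (Smat N ω * (Smat N ω)ᵀ)) a b - M a b| < ε2 := by
      intro a b
      have hentry : ((N : ℝ)⁻¹ • (Smat N ω * (Smat N ω)ᵀ)) a b
          = (N : ℝ)⁻¹ * (∑ j ∈ Finset.range N, S j ω a * S j ω b) := by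
        rw [Matrix.smul_apply, Matrix.mul_apply, smul_eq_mul]
        congr 1
        rw [← Fin.sum_univ_eq_sum_range (fun j => S j ω a * S j ω b) N]
        exact Finset.sum_congr rfl fun x _ => by rw [Matrix.transpose_apply, hSmat, hSmat]
      rw [hentry]
      exact hω2 a b
    have hδr : ∀ i' : Fin n, δ ≤ d N ω i' ^ 2 / N := by
      intro i'
      have h := rsvd_bridge hnp hNpos M D hDpos hMeig κ t ε2 hκ0 ht0 ht1
        (by rw [hδdef, hQdef, hKdef] at htδ; exact htδ)
        (by intro x hx; exact hbridge_eps x hx)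
        (Smat N ω) (fun i'' => d N ω i'' ^ 2 / N)
        (fun i'' => by positivity) hcol (hdchar N ω) hclose i'
      rw [hδdef, hQdef, hKdef]
      exact h
    have hd2 : δ * N ≤ d N ω i ^ 2 := by
      have h := hδr i
      have hNR : (0:ℝ) < N := by positivity
      calc δ * N ≤ (d N ω i ^ 2 / N) * N := mul_le_mul_of_nonneg_right h hNR.le
        _ = d N ω i ^ 2 := by field_simp
    have hdeloc := rsvd_deloc (Smat N ω) κ (δ * N) hκ0 hcol v hv (d N ω i ^ 2)
      (by positivity) hd2 heig j
    refine hdeloc.trans ?_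
    rw [Real.sqrt_mul hδ0.le]
    have hsN : 0 < Real.sqrt N := Real.sqrt_pos.mpr (by positivity)
    have heq : κ / (Real.sqrt δ * Real.sqrt N) = (κ / Real.sqrt δ) / Real.sqrt N := by
      rw [div_div]
    rw [heq]
    exact div_le_div_of_nonneg_right (fact2 N hN2) hsN.le
  refine le_trans ?_ (measure_mono hsub)
  -- probability of the good event
  have hG1c : μ G1ᶜ = 0 := by
    have hsub1 : G1ᶜ ⊆ ⋃ j : Fin N, {ω | ¬ Real.sqrt (∑ k, (S (j:ℕ) ω k) ^ 2) ≤ κ} := by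
      intro ω hω
      simp only [hG1def, Set.mem_compl_iff, Set.mem_setOf_eq, not_forall] at hω
      obtain ⟨j, hj⟩ := hω
      exact Set.mem_iUnion.mpr ⟨j, hj⟩
    refine measure_mono_null hsub1 (measure_iUnion_null fun j => ?_)
    exact ae_iff.mp (hbound (j:ℕ))
  have hab : ∀ a b : Fin p,
      μ {ω | ε2 ≤ |(N : ℝ)⁻¹ * (∑ j ∈ Finset.range N, S j ω a * S j ω b) - M a b|}
        ≤ ENNReal.ofReal (κ ^ 4 / (N * ε2 ^ 2)) :=
    fun a b => rsvd_cheb μ κ hκ0 S hmeas hindep hident hbound M hM a b N hNpos ε2 hε2pos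
  have hG2c : μ G2ᶜ ≤ (p : ENNReal) * ((p : ENNReal) * ENNReal.ofReal (κ ^ 4 / (N * ε2 ^ 2))) := by
    have hsub2 : G2ᶜ ⊆ ⋃ a : Fin p, ⋃ b : Fin p,
        {ω | ε2 ≤ |(N : ℝ)⁻¹ * (∑ j ∈ Finset.range N, S j ω a * S j ω b) - M a b|} := by
      intro ω hω
      simp only [hG2def, Set.mem_compl_iff, Set.mem_setOf_eq, not_forall, not_lt] at hω
      obtain ⟨a, b, hab'⟩ := hω
      exact Set.mem_iUnion.mpr ⟨a, Set.mem_iUnion.mpr ⟨b, hab'⟩⟩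
    calc μ G2ᶜ ≤ ∑' a : Fin p, μ (⋃ b : Fin p,
          {ω | ε2 ≤ |(N : ℝ)⁻¹ * (∑ j ∈ Finset.range N, S j ω a * S j ω b) - M a b|}) :=
          (measure_mono hsub2).trans (measure_iUnion_le _)
      _ ≤ ∑' a : Fin p, ∑' b : Fin p,
          μ {ω | ε2 ≤ |(N : ℝ)⁻¹ * (∑ j ∈ Finset.range N, S j ω a * S j ω b) - M a b|} :=
          ENNReal.tsum_le_tsum fun a => measure_iUnion_le _
      _ ≤ ∑' _a : Fin p, ∑' _b : Fin p, ENNReal.ofReal (κ ^ 4 / (N * ε2 ^ 2)) :=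
          ENNReal.tsum_le_tsum fun a => ENNReal.tsum_le_tsum fun b => hab a b
      _ = (p : ENNReal) * ((p : ENNReal) * ENNReal.ofReal (κ ^ 4 / (N * ε2 ^ 2))) := by
          simp [tsum_fintype, Finset.sum_const, Finset.card_univ, nsmul_eq_mul, mul_assoc]
  have hnum : (p:ℝ) * ((p:ℝ) * (κ ^ 4 / (N * ε2 ^ 2))) ≤ (N : ℝ) ^ (-(1/2 : ℝ)) := by
    have hNR : (0:ℝ) < N := by positivity
    have hRN : R ≤ Real.sqrt N := by
      have h2 : R ^ 2 ≤ (N : ℝ) := by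
        have h3 : (⌈R ^ 2⌉₊ + 1 : ℕ) ≤ N₀ := le_max_right _ _
        have h4 : (⌈R ^ 2⌉₊ : ℝ) ≤ N := by
          have : ⌈R ^ 2⌉₊ ≤ N := by omega
          exact_mod_cast this
        exact (Nat.le_ceil _).trans h4
      calc R = Real.sqrt (R ^ 2) := (Real.sqrt_sq hR0).symm
        _ ≤ Real.sqrt N := Real.sqrt_le_sqrt h2
    have hrw : (N : ℝ) ^ (-(1/2 : ℝ)) = Real.sqrt N / N := by
      have hsN : (0:ℝ) < Real.sqrt N := Real.sqrt_pos.mpr hNR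
      rw [Real.rpow_neg hNR.le, ← Real.sqrt_eq_rpow]
      rw [eq_div_iff hNR.ne', inv_mul_eq_div, div_eq_iff hsN.ne']
      exact (Real.mul_self_sqrt hNR.le).symm
    have hL : (p:ℝ) * ((p:ℝ) * (κ ^ 4 / (N * ε2 ^ 2))) = R / N := by
      rw [hRdef]; field_simp
    rw [hL, hrw]
    exact div_le_div_of_nonneg_right hRN hNR.le
  have hGc : μ (G1 ∩ G2)ᶜ ≤ ENNReal.ofReal ((N : ℝ) ^ (-(1/2 : ℝ))) := by
    rw [Set.compl_inter]
    refine (measure_union_le _ _).trans ?_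
    rw [hG1c, zero_add]
    refine hG2c.trans ?_
    calc (p : ENNReal) * ((p : ENNReal) * ENNReal.ofReal (κ ^ 4 / (N * ε2 ^ 2)))
        = ENNReal.ofReal ((p:ℝ) * ((p:ℝ) * (κ ^ 4 / (N * ε2 ^ 2)))) := by
          rw [ENNReal.ofReal_mul (by positivity), ENNReal.ofReal_mul (by positivity),
            ENNReal.ofReal_natCast]
      _ ≤ ENNReal.ofReal ((N : ℝ) ^ (-(1/2 : ℝ))) := ENNReal.ofReal_le_ofReal hnum
  have hunion : (1 : ENNReal) ≤ μ (G1 ∩ G2) + ENNReal.ofReal ((N : ℝ) ^ (-(1/2 : ℝ))) := by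
    calc (1 : ENNReal) = μ Set.univ := measure_univ.symm
      _ = μ ((G1 ∩ G2) ∪ (G1 ∩ G2)ᶜ) := by rw [Set.union_compl_self]
      _ ≤ μ (G1 ∩ G2) + μ (G1 ∩ G2)ᶜ := measure_union_le _ _
      _ ≤ μ (G1 ∩ G2) + ENNReal.ofReal ((N : ℝ) ^ (-(1/2 : ℝ))) := add_le_add_right hGc _
  exact tsub_le_iff_right.mpr hunion
end
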